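/- There exists a continuous excursion function f : [0,1] → [0,∞) whose graph G_f = {(x, f(x)) : x ∈ [0,1]} ⊂ ℝ² is a bi-Lipschitz image of the unit interval and hence has Assouad dimension equal to 1, while the continuum tree T_f = ([0,1]/≈_f, d_f) is starry (and therefore has infinite Assouad dimension and is not doubling). -/

import Mathlib

open Set

/-- The continuum-tree distance associated to an excursion function `f`. -/
noncomputable def treeDist (f : ℝ → ℝ) (x y : ℝ) : ℝ :=
  f x + f y - 2 * sInf (f '' Set.Icc (min x y) (max x y))

/-- The continuum-tree distance restricted to `[0,1]`; the continuum tree `T_f` is the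
quotient metric space of `([0,1], dIcc f)` by identifying points at distance `0`. -/
noncomputable def dIcc (f : ℝ → ℝ) (a b : Set.Icc (0 : ℝ) 1) : ℝ :=
  treeDist f a b


/-- The Euclidean distance between the points `(a, f a)` and `(b, f b)` of the graph of `f`,
for parameters `a, b ∈ [0,1]`; the graph `G_f ⊂ ℝ²` with the Euclidean metric is isometric to
`([0,1], dGraph f)` via `x ↦ (x, f x)`. -/
noncomputable def dGraph (f : ℝ → ℝ) (a b : Set.Icc (0 : ℝ) 1) : ℝ :=
  Real.sqrt (((a : ℝ) - b) ^ 2 + (f a - f b) ^ 2)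
/-- A pseudometric-like distance function `d` admits an `(A,η)`-approximate `n`-star. -/
def HasStarD {α : Type*} (d : α → α → ℝ) (A η : ℝ) (n : ℕ) : Prop :=
  ∃ ρ : ℝ, 0 < ρ ∧ ∃ x : Fin (n + 1) → α,
    (∀ i j : Fin (n + 1), i ≠ 0 → j ≠ 0 → i ≠ j →
      (A - η) * ρ ≤ d (x i) (x j) ∧ d (x i) (x j) ≤ A * ρ) ∧
    (∀ i : Fin (n + 1), i ≠ 0 → ρ ≤ d (x 0) (x i) ∧ d (x 0) (x i) ≤ (1 + η) * ρ)

/-- The distance function `d` is starry. -/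
def StarryD {α : Type*} (d : α → α → ℝ) : Prop :=
  ∃ A η : ℝ, 1 < A ∧ 0 < η ∧ η < (A - 1) / 2 ∧
    ∀ n : ℕ, ∃ An : ℝ, A ≤ An ∧ HasStarD d An η n

/-- The distance function `d` is doubling: some `K` balls of radius `r/2` cover each ball of
radius `r`. -/
def DoublingD {α : Type*} (d : α → α → ℝ) : Prop :=
  ∃ K : ℕ, 0 < K ∧ ∀ (x : α) (r : ℝ), 0 < r →
    ∃ c : Finset α, c.card ≤ K ∧ ∀ y : α, d x y ≤ r → ∃ z ∈ c, d z y ≤ r / 2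

/-- The distance function `d` satisfies the Assouad covering condition with exponent `a`. -/
def FiniteAssouadWithD {α : Type*} (d : α → α → ℝ) (a : ℝ) : Prop :=
  ∃ C : ℝ, 0 < C ∧ ∀ (x : α) (R r : ℝ), 0 < r → r < R → R < 1 →
    ∃ 𝒰 : Finset (Set α),
      (∀ U ∈ 𝒰, ∀ p ∈ U, ∀ q ∈ U, d p q ≤ r) ∧
      ({y : α | d x y ≤ R} ⊆ ⋃ U ∈ 𝒰, U) ∧
      (𝒰.card : ℝ) ≤ C * (R / r) ^ a

noncomputable def egB (x : ℝ) : ℝ := max 0 (min (min (2*x) (2 - 2*x)) (1/2))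
noncomputable def egδ (m : ℕ) : ℝ := (1/4)^m / (4*(m+1))
noncomputable def egA (m : ℕ) : ℝ := 1/4 + (1/4)^m
noncomputable def egC (m j : ℕ) : ℝ := egA m + (2*j+1) * egδ m
def egO : Set ℝ := ⋃ (m : ℕ), ⋃ j ∈ Finset.range m, Set.Ioo (egC m j - egδ m) (egC m j + egδ m)
noncomputable def egF (x : ℝ) : ℝ := egB x + Metric.infDist x egOᶜ

lemma egδ_pos (m : ℕ) : 0 < egδ m := by
  unfold egδ; positivity

lemma egδ_mul_le (m : ℕ) : (2*m+2) * egδ m ≤ (1/4:ℝ)^m / 2 := by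
  unfold egδ
  apply le_of_eq
  have h : (4:ℝ)*((m:ℝ)+1) ≠ 0 := by positivity
  field_simp
  ring

lemma egδ_nonneg (m : ℕ) : 0 ≤ egδ m := (egδ_pos m).le

-- tooth (m,j) interval bounds, j < m
lemma tooth_left (m j : ℕ) : egA m ≤ egC m j - egδ m := by
  have := egδ_nonneg m
  unfold egC
  have : (0:ℝ) ≤ 2*j * egδ m := by positivity
  nlinarith [egδ_nonneg m]

lemma tooth_right (m j : ℕ) (hj : j < m) : egC m j + egδ m ≤ 1/4 + (3/2) * (1/4:ℝ)^m := by
  have h1 : (2*(j:ℝ)+2) * egδ m ≤ (2*m:ℝ) * egδ m := by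
    have : ((j:ℝ)+1) ≤ m := by exact_mod_cast hj
    nlinarith [egδ_nonneg m]
  have h2 := egδ_mul_le m
  have h3 : (2*(m:ℝ)) * egδ m ≤ (2*m+2) * egδ m := by nlinarith [egδ_nonneg m]
  unfold egC egA
  push_cast at h1 h2 h3 ⊢
  nlinarith

lemma egA_ge (m : ℕ) : 1/4 + (1/4:ℝ)^m ≤ egA m := le_of_eq rfl

lemma valley_mem_range (m k : ℕ) (hk : k ≤ m) :
    1/4 + (1/4:ℝ)^m ≤ egA m + 2*k*egδ m ∧ egA m + 2*k*egδ m ≤ 1/4 + (3/2)*(1/4:ℝ)^m := by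
  constructor
  · unfold egA; nlinarith [egδ_nonneg m, Nat.cast_nonneg (α := ℝ) k]
  · have h1 : (2*(k:ℝ)) * egδ m ≤ (2*m+2) * egδ m := by
      have : (k:ℝ) ≤ m := by exact_mod_cast hk
      nlinarith [egδ_nonneg m]
    have h2 := egδ_mul_le m
    unfold egA
    push_cast at h1 h2 ⊢
    nlinarith

lemma pow_quarter_le (m' m : ℕ) (h : m' < m) : (1/4:ℝ)^m ≤ (1/4)^m' / 4 := by
  have : (1/4:ℝ)^m ≤ (1/4)^(m'+1) :=
    pow_le_pow_of_le_one (by norm_num) (by norm_num) h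
  calc (1/4:ℝ)^m ≤ (1/4)^(m'+1) := this
    _ = (1/4)^m' / 4 := by ring

lemma valley_not_mem (m k : ℕ) (hk : k ≤ m) : egA m + 2*k*egδ m ∉ egO := by
  intro h
  simp only [egO, Set.mem_iUnion, Finset.mem_range, exists_prop] at h
  obtain ⟨m', j, hj, h1, h2⟩ := h
  set v := egA m + 2*k*egδ m with hv
  have hvr := valley_mem_range m k hk
  rcases lt_trichotomy m' m with hlt | heq | hgt
  · -- tooth at coarser scale m' < m lies to the right of v
    have hL := tooth_left m' j
    have hp := pow_quarter_le m' m hlt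
    have hpm : (0:ℝ) < (1/4)^m := by positivity
    unfold egA at hL
    nlinarith
  · rw [heq] at hj h1 h2
    -- same cluster: valley between teeth
    have hδ := egδ_pos m
    unfold egC at h1 h2
    have hjk : (j:ℝ) < k := by nlinarith
    have hkj : (k:ℝ) < j + 1 := by nlinarith
    have : (j:ℝ) + 1 ≤ k := by exact_mod_cast (by exact_mod_cast hjk : j < k)
    linarith
  · -- finer scale m' > m : tooth lies to the left of v
    have hR := tooth_right m' j hj
    have hp := pow_quarter_le m m' hgt
    have hpm' : (0:ℝ) < (1/4)^m' := by positivity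
    nlinarith

lemma egO_subset : egO ⊆ Set.Ioo (1/4:ℝ) (3/4) := by
  intro x hx
  simp only [egO, Set.mem_iUnion, Finset.mem_range, exists_prop] at hx
  obtain ⟨m, j, hj, h1, h2⟩ := hx
  have hL := tooth_left m j
  have hR := tooth_right m j hj
  have hm1 : 1 ≤ m := by omega
  have hp1 : (1/4:ℝ)^m ≤ 1/4 := by
    calc (1/4:ℝ)^m ≤ (1/4)^1 := pow_le_pow_of_le_one (by norm_num) (by norm_num) hm1
      _ = 1/4 := pow_one _
  have hp0 : (0:ℝ) < (1/4)^m := by positivity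
  constructor
  · unfold egA at hL; nlinarith
  · nlinarith

lemma egB_nonneg (x : ℝ) : 0 ≤ egB x := le_max_left _ _

lemma egB_eq_half {x : ℝ} (h1 : 1/4 ≤ x) (h2 : x ≤ 3/4) : egB x = 1/2 := by
  unfold egB
  rw [min_eq_right (by rw [le_min_iff]; constructor <;> linarith),
    max_eq_right (by norm_num)]

lemma egF_nonneg (x : ℝ) : 0 ≤ egF x :=
  add_nonneg (egB_nonneg x) Metric.infDist_nonneg

lemma egB_zero : egB 0 = 0 := by unfold egB; norm_num
lemma egB_one : egB 1 = 0 := by unfold egB; norm_num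

lemma egB_pos {x : ℝ} (h1 : 0 < x) (h2 : x < 1) : 0 < egB x := by
  unfold egB
  rw [lt_max_iff]; right
  rw [lt_min_iff, lt_min_iff]
  refine ⟨⟨by linarith, by linarith⟩, by norm_num⟩

lemma egB_lip (a b : ℝ) : |egB a - egB b| ≤ 2 * |a - b| := by
  have h1 : |egB a - egB b| ≤ max |min (min (2*a) (2-2*a)) (1/2) - min (min (2*b) (2-2*b)) (1/2)| |(0:ℝ) - 0| := by
    unfold egB
    rw [max_comm 0 _, max_comm 0 _]
    exact abs_max_sub_max_le_max _ _ _ _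
  have h2 : |min (min (2*a) (2-2*a)) (1/2) - min (min (2*b) (2-2*b)) (1/2)|
      ≤ max |min (2*a) (2-2*a) - min (2*b) (2-2*b)| |(1/2:ℝ) - 1/2| :=
    abs_min_sub_min_le_max _ _ _ _
  have h3 : |min (2*a) (2-2*a) - min (2*b) (2-2*b)| ≤ max |2*a - 2*b| |(2-2*a) - (2-2*b)| :=
    abs_min_sub_min_le_max _ _ _ _
  have h4 : max |2*a - 2*b| |(2-2*a) - (2-2*b)| ≤ 2 * |a-b| := by
    apply max_le
    · rw [show 2*a - 2*b = 2*(a-b) by ring, abs_mul]; simp [abs_of_nonneg]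
    · rw [show (2-2*a) - (2-2*b) = 2*(b-a) by ring, abs_mul, abs_sub_comm b a]
      simp [abs_of_nonneg]
  have h5 : max |min (2*a) (2-2*a) - min (2*b) (2-2*b)| |(1/2:ℝ) - 1/2| ≤ 2*|a-b| := by
    apply max_le (le_trans h3 h4); simp [abs_nonneg]
  calc |egB a - egB b| ≤ _ := h1
    _ ≤ 2*|a-b| := by
        apply max_le (le_trans h2 h5); simp [abs_nonneg]

lemma egF_lip (a b : ℝ) : |egF a - egF b| ≤ 3 * |a - b| := by
  have hB := egB_lip a b
  have hd : |Metric.infDist a egOᶜ - Metric.infDist b egOᶜ| ≤ |a - b| := by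
    rw [abs_sub_le_iff]
    constructor
    · have := Metric.infDist_le_infDist_add_dist (x := a) (y := b) (s := egOᶜ)
      rw [Real.dist_eq] at this; linarith
    · have := Metric.infDist_le_infDist_add_dist (x := b) (y := a) (s := egOᶜ)
      rw [Real.dist_eq, abs_sub_comm b a] at this; linarith
  unfold egF
  calc |egB a + Metric.infDist a egOᶜ - (egB b + Metric.infDist b egOᶜ)|
      ≤ |egB a - egB b| + |Metric.infDist a egOᶜ - Metric.infDist b egOᶜ| := by
        rw [show egB a + Metric.infDist a egOᶜ - (egB b + Metric.infDist b egOᶜ)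
          = (egB a - egB b) + (Metric.infDist a egOᶜ - Metric.infDist b egOᶜ) by ring]
        exact abs_add_le _ _
    _ ≤ 3 * |a - b| := by linarith

lemma egF_cont : Continuous egF := by
  unfold egF
  apply Continuous.add
  · unfold egB
    exact continuous_const.max (((continuous_const.mul continuous_id).min
      (continuous_const.sub (continuous_const.mul continuous_id))).min continuous_const)
  · exact (Metric.lipschitz_infDist_pt _).continuous

-- range bound helpers
lemma pow_quarter_le_one (m : ℕ) (hm : 1 ≤ m) : (1/4:ℝ)^m ≤ 1/4 := by
  calc (1/4:ℝ)^m ≤ (1/4)^1 := pow_le_pow_of_le_one (by norm_num) (by norm_num) hm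
    _ = 1/4 := pow_one _

lemma valley_in_Icc (m k : ℕ) (hm : 1 ≤ m) (hk : k ≤ m) :
    1/4 ≤ egA m + 2*k*egδ m ∧ egA m + 2*k*egδ m ≤ 3/4 := by
  obtain ⟨h1, h2⟩ := valley_mem_range m k hk
  have hp : (0:ℝ) < (1/4)^m := by positivity
  have := pow_quarter_le_one m hm
  constructor <;> nlinarith

lemma zero_not_mem_egO : (0:ℝ) ∉ egO := fun h => by
  have h1 := (egO_subset h).1; linarith

lemma one_not_mem_egO : (1:ℝ) ∉ egO := fun h => by
  have h1 := (egO_subset h).2; linarith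

lemma egOc_nonempty : egOᶜ.Nonempty := ⟨0, zero_not_mem_egO⟩

lemma egF_valley (m k : ℕ) (hm : 1 ≤ m) (hk : k ≤ m) : egF (egA m + 2*k*egδ m) = 1/2 := by
  obtain ⟨h1, h2⟩ := valley_in_Icc m k hm hk
  unfold egF
  rw [egB_eq_half h1 h2, Metric.infDist_zero_of_mem (s := egOᶜ) (valley_not_mem m k hk), add_zero]

lemma egC_as_valley_right (m j : ℕ) : egC m j + egδ m = egA m + 2*((j:ℕ)+1:ℕ)*egδ m := by
  unfold egC; push_cast; ring

lemma egC_in_Icc (m j : ℕ) (hm : 1 ≤ m) (hj : j < m) : 1/4 ≤ egC m j ∧ egC m j ≤ 3/4 := by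
  have hL := tooth_left m j
  have hR := tooth_right m j hj
  have hδ := egδ_pos m
  have hp : (0:ℝ) < (1/4)^m := by positivity
  have hq := pow_quarter_le_one m hm
  have : (1/4:ℝ) ≤ egA m := by unfold egA; nlinarith
  constructor <;> nlinarith

lemma peak_infDist (m j : ℕ) (hj : j < m) : Metric.infDist (egC m j) egOᶜ = egδ m := by
  apply le_antisymm
  · have hmem : egC m j + egδ m ∈ egOᶜ := by
      rw [egC_as_valley_right]
      exact valley_not_mem m (j+1) (by omega)
    calc Metric.infDist (egC m j) egOᶜ ≤ dist (egC m j) (egC m j + egδ m) :=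
          Metric.infDist_le_dist_of_mem hmem
      _ = egδ m := by rw [Real.dist_eq]; rw [abs_of_nonpos (by linarith [egδ_pos m])]; ring
  · by_contra hlt
    push_neg at hlt
    obtain ⟨y, hy, hdy⟩ := (Metric.infDist_lt_iff egOc_nonempty).mp hlt
    apply hy
    simp only [egO, Set.mem_iUnion, Finset.mem_range, exists_prop]
    refine ⟨m, j, hj, ?_, ?_⟩ <;> (rw [Real.dist_eq] at hdy; rcases abs_lt.mp hdy with ⟨a, b⟩) <;> linarith

lemma egF_peak (m j : ℕ) (hm : 1 ≤ m) (hj : j < m) : egF (egC m j) = 1/2 + egδ m := by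
  obtain ⟨h1, h2⟩ := egC_in_Icc m j hm hj
  unfold egF
  rw [egB_eq_half h1 h2, peak_infDist m j hj]

lemma egF_ge_half {x : ℝ} (h1 : 1/4 ≤ x) (h2 : x ≤ 3/4) : 1/2 ≤ egF x := by
  unfold egF
  rw [egB_eq_half h1 h2]
  linarith [Metric.infDist_nonneg (x := x) (s := egOᶜ)]

lemma sInf_half {u v : ℝ} (hu : 1/4 ≤ u) (hv : v ≤ 3/4) (w : ℝ) (hw : w ∈ Icc u v)
    (hfw : egF w = 1/2) : sInf (egF '' Icc u v) = 1/2 := by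
  apply le_antisymm
  · exact csInf_le ⟨0, by rintro y ⟨t, _, rfl⟩; exact egF_nonneg t⟩ ⟨w, hw, hfw⟩
  · refine le_csInf ⟨egF w, ⟨w, hw, rfl⟩⟩ ?_
    rintro y ⟨t, ht, rfl⟩
    exact egF_ge_half (le_trans hu ht.1) (le_trans ht.2 hv)

lemma treeDist_formula {x y : ℝ} (hxy : x ≤ y) (h : sInf (egF '' Icc x y) = 1/2) :
    treeDist egF x y = egF x + egF y - 1 := by
  unfold treeDist
  rw [min_eq_left hxy, max_eq_right hxy, h]
  ring

lemma d_center_peak (m j : ℕ) (hm : 1 ≤ m) (hj : j < m) :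
    treeDist egF (egA m) (egC m j) = egδ m := by
  have hδ := egδ_pos m
  have hxy : egA m ≤ egC m j := by linarith [tooth_left m j]
  have hA : egA m = egA m + 2*((0:ℕ):ℝ)*egδ m := by push_cast; ring
  have hfA : egF (egA m) = 1/2 := by rw [hA]; exact_mod_cast egF_valley m 0 hm (by omega)
  have hu : 1/4 ≤ egA m := by
    have : (0:ℝ) < (1/4)^m := by positivity
    unfold egA; nlinarith
  have hv : egC m j ≤ 3/4 := (egC_in_Icc m j hm hj).2
  rw [treeDist_formula hxy (sInf_half hu hv (egA m) ⟨le_refl _, hxy⟩ hfA), hfA,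
    egF_peak m j hm hj]
  ring

lemma d_peak_peak (m j1 j2 : ℕ) (hm : 1 ≤ m) (h12 : j1 < j2) (hj2 : j2 < m) :
    treeDist egF (egC m j1) (egC m j2) = 2 * egδ m := by
  have hδ := egδ_pos m
  have hj1 : j1 < m := lt_trans h12 hj2
  have hxy : egC m j1 ≤ egC m j2 := by
    unfold egC
    have : ((j1:ℝ)) ≤ j2 := by exact_mod_cast h12.le
    nlinarith
  set w := egA m + 2*((j1+1:ℕ):ℝ)*egδ m with hwdef
  have hfw : egF w = 1/2 := egF_valley m (j1+1) hm (by omega)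
  have hw1 : egC m j1 ≤ w := by
    rw [hwdef]; unfold egC; push_cast; nlinarith
  have hw2 : w ≤ egC m j2 := by
    rw [hwdef]; unfold egC
    have : ((j1:ℝ)) + 1 ≤ j2 := by exact_mod_cast h12
    push_cast; nlinarith
  have hu : 1/4 ≤ egC m j1 := (egC_in_Icc m j1 hm hj1).1
  have hv : egC m j2 ≤ 3/4 := (egC_in_Icc m j2 hm hj2).2
  rw [treeDist_formula hxy (sInf_half hu hv w ⟨hw1, hw2⟩ hfw), egF_peak m j1 hm hj1,
    egF_peak m j2 hm hj2]
  ring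

section Tri
variable {f : ℝ → ℝ} (hf : ∀ x, 0 ≤ f x)

lemma treeDist_symm (f : ℝ → ℝ) (x y : ℝ) : treeDist f x y = treeDist f y x := by
  unfold treeDist
  rw [min_comm, max_comm]; ring

include hf

lemma img_bdd (s : Set ℝ) : BddBelow (f '' s) :=
  ⟨0, by rintro y ⟨t, _, rfl⟩; exact hf t⟩

lemma sInf_le_endpoints {u v : ℝ} (huv : u ≤ v) :
    sInf (f '' Icc u v) ≤ f u ∧ sInf (f '' Icc u v) ≤ f v :=
  ⟨csInf_le (img_bdd hf _) ⟨u, ⟨le_refl _, huv⟩, rfl⟩,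
   csInf_le (img_bdd hf _) ⟨v, ⟨huv, le_refl _⟩, rfl⟩⟩

lemma sInf_mono_tri {u v u' v' : ℝ} (h1 : u' ≤ u) (h2 : v ≤ v') (huv : u ≤ v) :
    sInf (f '' Icc u' v') ≤ sInf (f '' Icc u v) :=
  csInf_le_csInf (img_bdd hf _) ⟨f u, u, ⟨le_refl _, huv⟩, rfl⟩
    (Set.image_mono (Set.Icc_subset_Icc h1 h2))

lemma sInf_split {u v w : ℝ} (h1 : u ≤ w) (h2 : w ≤ v) :
    min (sInf (f '' Icc u w)) (sInf (f '' Icc w v)) ≤ sInf (f '' Icc u v) := by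
  refine le_csInf ⟨f u, ⟨u, ⟨le_refl _, le_trans h1 h2⟩, rfl⟩⟩ ?_
  rintro y ⟨t, ht, rfl⟩
  rcases le_total t w with htw | htw
  · exact le_trans (min_le_left _ _) (csInf_le (img_bdd hf _) ⟨t, ⟨ht.1, htw⟩, rfl⟩)
  · exact le_trans (min_le_right _ _) (csInf_le (img_bdd hf _) ⟨t, ⟨htw, ht.2⟩, rfl⟩)

lemma treeDist_triangle_aux {x y z : ℝ} (hxz : x ≤ z) :
    treeDist f x z ≤ treeDist f x y + treeDist f y z := by
  unfold treeDist
  rw [min_eq_left hxz, max_eq_right hxz]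
  rcases le_total y x with h1 | h1
  · -- y ≤ x ≤ z
    rw [min_eq_right h1, max_eq_left h1, min_eq_left (le_trans h1 hxz),
      max_eq_right (le_trans h1 hxz)]
    have hm := sInf_mono_tri hf h1 (le_refl z) hxz
    have he := (sInf_le_endpoints hf h1).1
    linarith
  · rcases le_total y z with h2 | h2
    · -- x ≤ y ≤ z
      rw [min_eq_left h1, max_eq_right h1, min_eq_left h2, max_eq_right h2]
      have hs := sInf_split hf h1 h2
      have hey := (sInf_le_endpoints hf h1).2
      have hey' := (sInf_le_endpoints hf h2).1
      rcases le_total (sInf (f '' Icc x y)) (sInf (f '' Icc y z)) with h | h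
      · rw [min_eq_left h] at hs; linarith
      · rw [min_eq_right h] at hs; linarith
    · -- x ≤ z ≤ y
      rw [min_eq_left (le_trans hxz h2), max_eq_right (le_trans hxz h2),
        min_eq_right h2, max_eq_left h2]
      have hm := sInf_mono_tri hf (le_refl x) h2 hxz
      have he := (sInf_le_endpoints hf h2).2
      linarith

lemma treeDist_triangle (x y z : ℝ) :
    treeDist f x z ≤ treeDist f x y + treeDist f y z := by
  rcases le_total x z with h | h
  · exact treeDist_triangle_aux hf h
  · rw [treeDist_symm f x z, treeDist_symm f x y, treeDist_symm f y z]
    calc treeDist f z x ≤ treeDist f z y + treeDist f y x := treeDist_triangle_aux hf h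
      _ = treeDist f y x + treeDist f z y := by ring
end Tri


lemma egF_zero : egF 0 = 0 := by
  unfold egF
  rw [egB_zero, Metric.infDist_zero_of_mem (s := egOᶜ) zero_not_mem_egO, add_zero]

lemma egF_one : egF 1 = 0 := by
  unfold egF
  rw [egB_one, Metric.infDist_zero_of_mem (s := egOᶜ) one_not_mem_egO, add_zero]

lemma egF_pos {x : ℝ} (h1 : 0 < x) (h2 : x < 1) : 0 < egF x := by
  have := egB_pos h1 h2
  have h := Metric.infDist_nonneg (x := x) (s := egOᶜ)
  unfold egF; linarith

lemma dGraph_ge (f : ℝ → ℝ) (a b : Set.Icc (0:ℝ) 1) : |(a:ℝ) - b| ≤ dGraph f a b := by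
  unfold dGraph
  rw [← Real.sqrt_sq_eq_abs]
  exact Real.sqrt_le_sqrt (by nlinarith [sq_nonneg (f a - f b)])

lemma dGraph_le (a b : Set.Icc (0:ℝ) 1) : dGraph egF a b ≤ 4 * |(a:ℝ) - b| := by
  unfold dGraph
  have h := egF_lip a b
  have h2 : (egF a - egF b)^2 ≤ 9 * ((a:ℝ) - b)^2 := by
    have := abs_nonneg ((a:ℝ) - b)
    nlinarith [sq_abs (egF a - egF b), sq_abs ((a:ℝ) - b), abs_nonneg (egF a - egF b)]
  calc Real.sqrt (((a:ℝ) - b)^2 + (egF a - egF b)^2) ≤ Real.sqrt ((4 * |(a:ℝ) - b|)^2) := by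
        apply Real.sqrt_le_sqrt
        nlinarith [sq_abs ((a:ℝ) - b)]
    _ = 4 * |(a:ℝ) - b| := Real.sqrt_sq (by positivity)

lemma assouad_one : FiniteAssouadWithD (dGraph egF) 1 := by
  classical
  refine ⟨10, by norm_num, fun x R r hr hrR hR1 => ?_⟩
  have hr4 : (0:ℝ) < r/4 := by linarith
  set N : ℕ := ⌈(8:ℝ)*R/r⌉₊ + 1 with hN
  set I : ℕ → Set (Set.Icc (0:ℝ) 1) :=
    fun k => {y : Set.Icc (0:ℝ) 1 | (x:ℝ) - R + k*(r/4) ≤ (y:ℝ) ∧ (y:ℝ) ≤ (x:ℝ) - R + (k+1)*(r/4)} with hI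
  refine ⟨(Finset.range N).image I, ?_, ?_, ?_⟩
  · intro U hU p hp q hq
    obtain ⟨k, _, rfl⟩ := Finset.mem_image.mp hU
    rw [hI] at hp hq
    obtain ⟨hp1, hp2⟩ := hp
    obtain ⟨hq1, hq2⟩ := hq
    have : |(p:ℝ) - q| ≤ r/4 := by rw [abs_le]; constructor <;> linarith
    calc dGraph egF p q ≤ 4 * |(p:ℝ) - q| := dGraph_le p q
      _ ≤ r := by linarith
  · intro y hy
    simp only [mem_setOf_eq] at hy
    have hxy : |(x:ℝ) - y| ≤ R := le_trans (dGraph_ge egF x y) hy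
    set t : ℝ := (y:ℝ) - ((x:ℝ) - R) with ht
    have ht0 : 0 ≤ t := by rw [abs_le] at hxy; simp [ht]; linarith [hxy.2]
    have ht2 : t ≤ 2*R := by rw [abs_le] at hxy; simp [ht]; linarith [hxy.1]
    set k : ℕ := ⌊t/(r/4)⌋₊ with hk
    have hkN : k < N := by
      have h1 : t/(r/4) ≤ 8*R/r := by
        rw [div_le_div_iff₀ hr4 hr]; nlinarith
      have : k ≤ ⌈(8:ℝ)*R/r⌉₊ :=
        le_trans (Nat.floor_le_floor h1) (Nat.floor_le_ceil _)
      omega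
    have hmem : I k ∈ (Finset.range N).image I := Finset.mem_image.mpr ⟨k, Finset.mem_range.mpr hkN, rfl⟩
    apply Set.mem_biUnion hmem
    rw [hI]
    have h1 : (k:ℝ)*(r/4) ≤ t := by
      have := Nat.floor_le (by positivity : (0:ℝ) ≤ t/(r/4))
      rw [← hk] at this
      calc (k:ℝ)*(r/4) ≤ (t/(r/4))*(r/4) := by nlinarith
        _ = t := by field_simp
    have h2 : t ≤ ((k:ℝ)+1)*(r/4) := by
      have := Nat.lt_floor_add_one (t/(r/4))
      rw [← hk] at this
      have := (div_lt_iff₀ hr4).mp this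
      linarith
    constructor
    · rw [ht] at h1; linarith
    · rw [ht] at h2; linarith
  · have hcard : ((Finset.range N).image I).card ≤ N := le_trans (Finset.card_image_le) (le_of_eq (Finset.card_range N))
    have hR0 : 0 < R := lt_trans hr hrR
    have hceil : (⌈(8:ℝ)*R/r⌉₊ : ℝ) < 8*R/r + 1 := Nat.ceil_lt_add_one (by positivity)
    have hRr : 1 ≤ R/r := by rw [le_div_iff₀ hr]; linarith
    have hNle : (N:ℝ) ≤ 8*R/r + 2 := by
      rw [hN]; push_cast; linarith
    calc (((Finset.range N).image I).card : ℝ) ≤ (N:ℝ) := by exact_mod_cast hcard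
      _ ≤ 8*R/r + 2 := hNle
      _ ≤ 10 * (R/r) := by
          have : 8*R/r = 8*(R/r) := by ring
          rw [this]; linarith
      _ = 10 * (R/r) ^ (1:ℝ) := by rw [Real.rpow_one]

lemma assouad_lower (a : ℝ) (ha : 0 ≤ a) (hA : FiniteAssouadWithD (dGraph egF) a) : 1 ≤ a := by
  by_contra hcon
  push_neg at hcon
  obtain ⟨C, hC, hP⟩ := hA
  set t : ℝ := (1/(8*C))^((1-a)⁻¹) with htdef
  have ht0 : 0 < t := Real.rpow_pos_of_pos (by positivity) _
  set r : ℝ := min (1/4) t with hrdef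
  have hr0 : 0 < r := lt_min (by norm_num) ht0
  have hr14 : r ≤ 1/4 := min_le_left _ _
  obtain ⟨𝒰, hdiam, hcov, hcard⟩ :=
    hP ⟨1/2, by norm_num⟩ (1/2) r hr0 (by linarith) (by norm_num)
  -- coverage of the middle interval by the projections
  have hsub : Icc (3/8:ℝ) (5/8) ⊆ ⋃ U ∈ 𝒰, (Subtype.val '' U : Set ℝ) := by
    intro y hy
    have hy01 : y ∈ Icc (0:ℝ) 1 := ⟨by linarith [hy.1], by linarith [hy.2]⟩
    have hball : dGraph egF ⟨1/2, by norm_num⟩ ⟨y, hy01⟩ ≤ 1/2 := by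
      have h4 := dGraph_le ⟨1/2, by norm_num⟩ ⟨y, hy01⟩
      have : |(1/2:ℝ) - y| ≤ 1/8 := by
        rw [abs_le]; constructor <;> [linarith [hy.2]; linarith [hy.1]]
      calc dGraph egF ⟨1/2, by norm_num⟩ ⟨y, hy01⟩ ≤ 4 * |(1/2:ℝ) - y| := h4
        _ ≤ 1/2 := by linarith
    have := hcov hball
    obtain ⟨U, hU, hyU⟩ := Set.mem_iUnion₂.mp this
    exact Set.mem_iUnion₂.mpr ⟨U, hU, ⟨⟨y, hy01⟩, hyU, rfl⟩⟩
  -- volume bound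
  have hvol : ENNReal.ofReal (1/4) ≤ (𝒰.card : ENNReal) * ENNReal.ofReal r := by
    have h1 : MeasureTheory.volume (Icc (3/8:ℝ) (5/8))
        ≤ MeasureTheory.volume (⋃ U ∈ 𝒰, (Subtype.val '' U : Set ℝ)) :=
      MeasureTheory.measure_mono hsub
    have h2 : MeasureTheory.volume (⋃ U ∈ 𝒰, (Subtype.val '' U : Set ℝ))
        ≤ ∑ U ∈ 𝒰, MeasureTheory.volume (Subtype.val '' U : Set ℝ) :=
      MeasureTheory.measure_biUnion_finset_le _ _
    have h3 : ∀ U ∈ 𝒰, MeasureTheory.volume (Subtype.val '' U : Set ℝ) ≤ ENNReal.ofReal r := by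
      intro U hU
      refine le_trans (Real.volume_le_diam _) ?_
      apply EMetric.diam_le
      rintro p ⟨p', hp', rfl⟩ q ⟨q', hq', rfl⟩
      rw [edist_dist]
      apply ENNReal.ofReal_le_ofReal
      calc dist (p':ℝ) (q':ℝ) = |(p':ℝ) - q'| := Real.dist_eq _ _
        _ ≤ dGraph egF p' q' := dGraph_ge egF p' q'
        _ ≤ r := hdiam U hU p' hp' q' hq'
    have h4 : ∑ U ∈ 𝒰, MeasureTheory.volume (Subtype.val '' U : Set ℝ)
        ≤ 𝒰.card • ENNReal.ofReal r := Finset.sum_le_card_nsmul _ _ _ h3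
    rw [Real.volume_Icc] at h1
    have : (5/8 : ℝ) - 3/8 = 1/4 := by norm_num
    rw [this] at h1
    calc ENNReal.ofReal (1/4) ≤ _ := h1
      _ ≤ _ := h2
      _ ≤ 𝒰.card • ENNReal.ofReal r := h4
      _ = (𝒰.card : ENNReal) * ENNReal.ofReal r := nsmul_eq_mul _ _
  have hreal : (1/4 : ℝ) ≤ (𝒰.card : ℝ) * r := by
    rw [show ((𝒰.card : ENNReal)) = ENNReal.ofReal (𝒰.card : ℝ) by
        rw [ENNReal.ofReal_natCast], ← ENNReal.ofReal_mul (by positivity)] at hvol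
    exact (ENNReal.ofReal_le_ofReal_iff (by positivity)).mp hvol
  -- combine with the cardinality bound
  have hra : 0 < r ^ a := Real.rpow_pos_of_pos hr0 _
  have hstep1 : ((1/2)/r : ℝ) ^ a ≤ (r ^ a)⁻¹ := by
    have h12 : ((1/2)/r : ℝ) ≤ 1/r := by gcongr; norm_num
    calc ((1/2)/r : ℝ) ^ a ≤ (1/r) ^ a :=
          Real.rpow_le_rpow (by positivity) h12 ha
      _ = (r ^ a)⁻¹ := by rw [one_div, Real.inv_rpow hr0.le]
  have hchain : (1/4 : ℝ) ≤ C * r ^ (1 - a) := by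
    have h1 : (𝒰.card : ℝ) * r ≤ (C * ((1/2)/r) ^ a) * r :=
      mul_le_mul_of_nonneg_right hcard hr0.le
    have h2 : (C * ((1/2)/r) ^ a) * r ≤ (C * (r ^ a)⁻¹) * r := by
      have := mul_le_mul_of_nonneg_left hstep1 hC.le
      nlinarith
    have h3 : (C * (r ^ a)⁻¹) * r = C * r ^ (1 - a) := by
      rw [Real.rpow_sub hr0, Real.rpow_one]
      field_simp
    linarith
  have hfin : r ^ (1 - a) ≤ 1/(8*C) := by
    have h1 : r ^ (1-a) ≤ t ^ (1-a) :=
      Real.rpow_le_rpow hr0.le (min_le_right _ _) (by linarith)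
    have h2 : t ^ (1-a) = 1/(8*C) := by
      rw [htdef, ← Real.rpow_mul (by positivity : (0:ℝ) ≤ 1/(8*C)),
        inv_mul_cancel₀ (by intro h; apply absurd h; intro h'; linarith [sub_eq_zero.mp h'] : (1:ℝ) - a ≠ 0), Real.rpow_one]
    exact h1.trans (le_of_eq h2)
  have hm : C * r ^ (1-a) ≤ C * (1/(8*C)) := mul_le_mul_of_nonneg_left hfin hC.le
  have he : C * (1/(8*C)) = 1/8 := by field_simp
  linarith

-- ### star points
lemma d_peak_peak' (m j1 j2 : ℕ) (hm : 1 ≤ m) (h12 : j1 ≠ j2) (hj1 : j1 < m) (hj2 : j2 < m) :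
    treeDist egF (egC m j1) (egC m j2) = 2 * egδ m := by
  rcases lt_or_gt_of_ne h12 with h | h
  · exact d_peak_peak m j1 j2 hm h hj2
  · rw [treeDist_symm]; exact d_peak_peak m j2 j1 hm h hj1

lemma egδ_small (m : ℕ) (hm : 1 ≤ m) : egδ m ≤ 1/8 := by
  unfold egδ
  have h1 : (1/4:ℝ)^m ≤ 1/4 := pow_quarter_le_one m hm
  have h2 : (8:ℝ) ≤ 4*((m:ℝ)+1) := by
    have : (1:ℝ) ≤ m := by exact_mod_cast hm
    linarith
  have h3 : (0:ℝ) < 4*((m:ℝ)+1) := by linarith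
  rw [div_le_iff₀ h3]
  nlinarith

lemma star_points (n : ℕ) : ∃ x : Fin (n+1) → (Set.Icc (0:ℝ) 1),
    (∀ i j : Fin (n+1), i ≠ 0 → j ≠ 0 → i ≠ j → dIcc egF (x i) (x j) = 2 * egδ (n+1)) ∧
    (∀ i : Fin (n+1), i ≠ 0 → dIcc egF (x 0) (x i) = egδ (n+1)) := by
  set m := n + 1 with hm
  have hm1 : 1 ≤ m := by omega
  have hA : egA m ∈ Set.Icc (0:ℝ) 1 := by
    have h := valley_in_Icc m 0 hm1 (by omega)
    push_cast at h
    constructor <;> [linarith [h.1]; linarith [h.2]]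
  have hCmem : ∀ j, j < m → egC m j ∈ Set.Icc (0:ℝ) 1 := by
    intro j hj
    have h := egC_in_Icc m j hm1 hj
    constructor <;> [linarith [h.1]; linarith [h.2]]
  have hjlt : ∀ i : Fin (n+1), i.val - 1 < m := fun i => by omega
  refine ⟨fun i => if i = 0 then ⟨egA m, hA⟩ else ⟨egC m (i.val - 1), hCmem _ (hjlt i)⟩, ?_, ?_⟩
  · intro i j hi hj hij
    simp only [if_neg hi, if_neg hj]
    have hvi : 1 ≤ i.val := by
      rcases Nat.eq_zero_or_pos i.val with h | h
      · exact absurd (Fin.ext h) hi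
      · exact h
    have hvj : 1 ≤ j.val := by
      rcases Nat.eq_zero_or_pos j.val with h | h
      · exact absurd (Fin.ext h) hj
      · exact h
    have hne : i.val - 1 ≠ j.val - 1 := by
      intro h
      apply hij
      apply Fin.ext
      omega
    exact d_peak_peak' m _ _ hm1 hne (hjlt i) (hjlt j)
  · intro i hi
    simp only [if_pos rfl, if_neg hi]
    exact d_center_peak m _ hm1 (hjlt i)

lemma starry_egF : StarryD (dIcc egF) := by
  refine ⟨2, 1/4, by norm_num, by norm_num, by norm_num, fun n => ⟨2, le_refl 2, ?_⟩⟩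
  obtain ⟨x, hpair, hcen⟩ := star_points n
  have hδ := egδ_pos (n+1)
  refine ⟨egδ (n+1), hδ, x, ?_, ?_⟩
  · intro i j hi hj hij
    rw [hpair i j hi hj hij]
    constructor <;> linarith
  · intro i hi
    rw [hcen i hi]
    constructor <;> linarith

lemma not_assouad_egF : ¬ ∃ a : ℝ, 0 ≤ a ∧ FiniteAssouadWithD (dIcc egF) a := by
  rintro ⟨a, ha, C, hC, hP⟩
  obtain ⟨n, hn⟩ := exists_nat_gt (C * (2:ℝ) ^ a)
  obtain ⟨x, hpair, hcen⟩ := star_points n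
  have hδ := egδ_pos (n+1)
  have hsm := egδ_small (n+1) (by omega)
  obtain ⟨𝒰, hdiam, hcov, hcard⟩ :=
    hP (x 0) (2 * egδ (n+1)) (egδ (n+1)) hδ (by linarith) (by linarith)
  classical
  have key : ∀ i : Fin (n+1), ∃ V : Set (Set.Icc (0:ℝ) 1), i ≠ 0 → V ∈ 𝒰 ∧ x i ∈ V := by
    intro i
    by_cases hi : i = 0
    · exact ⟨∅, fun h => absurd hi h⟩
    · have hx : x i ∈ {y | dIcc egF (x 0) y ≤ 2 * egδ (n+1)} := by
        rw [Set.mem_setOf_eq, hcen i hi]; linarith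
      obtain ⟨V, hV, hxV⟩ := Set.mem_iUnion₂.mp (hcov hx)
      exact ⟨V, fun _ => ⟨hV, hxV⟩⟩
  choose V hV using key
  set s : Finset (Fin (n+1)) := Finset.univ.erase 0 with hs
  have hsc : s.card = n := by simp [hs]
  have hinj : ∀ i ∈ s, ∀ j ∈ s, V i = V j → i = j := by
    intro i hi j hj hVij
    by_contra hij
    have hi0 : i ≠ 0 := Finset.ne_of_mem_erase hi
    have hj0 : j ≠ 0 := Finset.ne_of_mem_erase hj
    have h1 := (hV i hi0).2
    have h2 := (hV j hj0).2
    rw [hVij] at h1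
    have := hdiam (V j) (hV j hj0).1 (x i) h1 (x j) h2
    rw [hpair i j hi0 hj0 hij] at this
    linarith
  have hmap : ∀ i ∈ s, V i ∈ 𝒰 := fun i hi => (hV i (Finset.ne_of_mem_erase hi)).1
  have hle : s.card ≤ 𝒰.card := Finset.card_le_card_of_injOn V hmap hinj
  have hRr : (2 * egδ (n+1)) / (egδ (n+1)) = 2 := by field_simp
  rw [hRr] at hcard
  rw [hsc] at hle
  have : (n:ℝ) ≤ (𝒰.card : ℝ) := by exact_mod_cast hle
  linarith

lemma not_doubling_egF : ¬ DoublingD (dIcc egF) := by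
  rintro ⟨K, hK, hP⟩
  obtain ⟨x, hpair, hcen⟩ := star_points (K+1)
  have hδ := egδ_pos (K+1+1)
  obtain ⟨c, hcard, hcov⟩ := hP (x 0) (egδ (K+1+1)) hδ
  classical
  have key : ∀ i : Fin (K+1+1), ∃ z : Set.Icc (0:ℝ) 1, i ≠ 0 → z ∈ c ∧ dIcc egF z (x i) ≤ egδ (K+1+1) / 2 := by
    intro i
    by_cases hi : i = 0
    · exact ⟨x 0, fun h => absurd hi h⟩
    · have hx : dIcc egF (x 0) (x i) ≤ egδ (K+1+1) := le_of_eq (hcen i hi)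
      obtain ⟨z, hz, hzd⟩ := hcov (x i) hx
      exact ⟨z, fun _ => ⟨hz, hzd⟩⟩
  choose z hz using key
  set s : Finset (Fin (K+1+1)) := Finset.univ.erase 0 with hs
  have hsc : s.card = K+1 := by simp [hs]
  have hinj : ∀ i ∈ s, ∀ j ∈ s, z i = z j → i = j := by
    intro i hi j hj hzij
    by_contra hij
    have hi0 : i ≠ 0 := Finset.ne_of_mem_erase hi
    have hj0 : j ≠ 0 := Finset.ne_of_mem_erase hj
    have h1 := (hz i hi0).2
    have h2 := (hz j hj0).2
    rw [hzij] at h1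
    have htri : dIcc egF (x i) (x j)
        ≤ dIcc egF (x i) (z j) + dIcc egF (z j) (x j) :=
      treeDist_triangle egF_nonneg _ _ _
    rw [hpair i j hi0 hj0 hij] at htri
    have hsymm : dIcc egF (x i) (z j) = dIcc egF (z j) (x i) := treeDist_symm egF _ _
    rw [hsymm] at htri
    linarith
  have hmap : ∀ i ∈ s, z i ∈ c := fun i hi => (hz i (Finset.ne_of_mem_erase hi)).1
  have hle : s.card ≤ c.card := Finset.card_le_card_of_injOn z hmap hinj
  rw [hsc] at hle
  omega

/-- There exists a continuous excursion function `f : [0,1] → [0,∞)` whose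
graph `G_f ⊂ ℝ²` is a bi-Lipschitz image of the unit interval — hence has Assouad dimension
equal to `1` — while the continuum tree `T_f = ([0,1]/≈_f, d_f)` is starry (and therefore has
infinite Assouad dimension and is not doubling). -/
theorem exists_excursion_graph_dimension_one_tree_starry :
    ∃ f : ℝ → ℝ,
      -- `f` is an excursion function
      (ContinuousOn f (Icc 0 1) ∧ f 0 = 0 ∧ f 1 = 0 ∧
        (∀ u ∈ Ioo (0 : ℝ) 1, 0 < f u) ∧ ∀ u ∈ Icc (0 : ℝ) 1, 0 ≤ f u) ∧
      -- the parametrisation `x ↦ (x, f x)` of the graph is bi-Lipschitz on `[0,1]`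
      (∃ C : ℝ, 1 ≤ C ∧ ∀ a b : Set.Icc (0 : ℝ) 1,
        C⁻¹ * |(a : ℝ) - b| ≤ dGraph f a b ∧ dGraph f a b ≤ C * |(a : ℝ) - b|) ∧
      -- hence the graph has Assouad dimension exactly `1`
      IsGLB {a : ℝ | 0 ≤ a ∧ FiniteAssouadWithD (dGraph f) a} 1 ∧
      -- while the continuum tree is starry, of infinite Assouad dimension, and not doubling
      StarryD (dIcc f) ∧
      (¬ ∃ a : ℝ, 0 ≤ a ∧ FiniteAssouadWithD (dIcc f) a) ∧
      ¬ DoublingD (dIcc f) := by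
  refine ⟨egF, ⟨egF_cont.continuousOn, egF_zero, egF_one,
      fun u hu => egF_pos hu.1 hu.2, fun u _ => egF_nonneg u⟩, ?_, ?_, starry_egF,
      not_assouad_egF, not_doubling_egF⟩
  · refine ⟨4, by norm_num, fun a b => ⟨?_, dGraph_le a b⟩⟩
    have h1 := dGraph_ge egF a b
    have h2 := abs_nonneg ((a:ℝ) - b)
    have : (4:ℝ)⁻¹ * |(a:ℝ) - b| ≤ |(a:ℝ) - b| := by nlinarith
    linarith
  · exact IsLeast.isGLB ⟨⟨zero_le_one, assouad_one⟩, fun a ha => assouad_lower a ha.1 ha.2⟩
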